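/- Fix ε ∈ (0, 1/2). For points p, q ∈ ℝ^d and threshold t > 0, define α(p,q) = (1/d)·Σ_{a=1}^d min(|p_a − q_a|/(2t), 1). If ‖p−q‖₁ ≤ t then (1/2)(1 − (1 − α(p,q))^d) ≤ (1/2)(1 − (1 − 1/(2d))^d), and if ‖p−q‖₁ ≥ (1+ε)t then (1/2)(1 − (1 − α(p,q))^d) ≥ (1/2)(1 − (1 − (1+ε)/(2d))^d). Moreover the gap between these two bounds is at least a constant times ε (for all d ≥ 1). -/

import Mathlib

set_option maxHeartbeats 2000000 in
theorem lsh_collision_bounds :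
    ∃ c : ℝ, 0 < c ∧
      ∀ ε : ℝ, ε ∈ Set.Ioo (0 : ℝ) (1/2) →
      ∀ d : ℕ, 1 ≤ d →
      ∀ t : ℝ, 0 < t →
      ∀ p q : Fin d → ℝ,
      ∀ α : ℝ, α = (1 / (d : ℝ)) * ∑ a : Fin d, min (|p a - q a| / (2 * t)) 1 →
        ((∑ a : Fin d, |p a - q a| ≤ t →
            (1/2) * (1 - (1 - α) ^ d) ≤ (1/2) * (1 - (1 - 1 / (2 * (d : ℝ))) ^ d)) ∧
         ((1 + ε) * t ≤ ∑ a : Fin d, |p a - q a| →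
            (1/2) * (1 - (1 - (1 + ε) / (2 * (d : ℝ))) ^ d) ≤ (1/2) * (1 - (1 - α) ^ d)) ∧
         c * ε ≤ (1/2) * (1 - (1 - (1 + ε) / (2 * (d : ℝ))) ^ d) -
            (1/2) * (1 - (1 - 1 / (2 * (d : ℝ))) ^ d)) := by
  refine ⟨1/16, by norm_num, ?_⟩
  rintro ε ⟨hε0, hε2⟩ d hd t ht p q α hα
  have hD1 : (1:ℝ) ≤ (d:ℝ) := by exact_mod_cast hd
  have hD0 : (0:ℝ) < (d:ℝ) := by linarith
  have ht2 : (0:ℝ) < 2*t := by linarith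
  set S := ∑ a : Fin d, min (|p a - q a| / (2 * t)) 1 with hS
  have hαD : α * (d:ℝ) = S := by rw [hα]; field_simp
  have hS_nonneg : 0 ≤ S := Finset.sum_nonneg fun a _ =>
    le_min (div_nonneg (abs_nonneg _) ht2.le) one_pos.le
  have hS_le_d : S ≤ (d:ℝ) := by
    calc S ≤ ∑ _a : Fin d, (1:ℝ) := Finset.sum_le_sum fun a _ => min_le_right _ _
    _ = d := by simp
  have hα1 : α ≤ 1 := by nlinarith
  refine ⟨?_, ?_, ?_⟩
  · -- near case
    intro hsum
    have hS12 : S ≤ 1/2 := by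
      have h1 : S ≤ (∑ a : Fin d, |p a - q a|) / (2*t) := by
        rw [Finset.sum_div]
        exact Finset.sum_le_sum fun a _ => min_le_left _ _
      have h2 : (∑ a : Fin d, |p a - q a|) / (2*t) ≤ t / (2*t) := by
        gcongr
      have h3 : t / (2*t) = 1/2 := by field_simp
      linarith [h1, h2, h3 ▸ h2]
    have hαle : α ≤ 1/(2*(d:ℝ)) := by
      rw [le_div_iff₀ (by positivity : (0:ℝ) < 2*(d:ℝ))]
      nlinarith
    have hbase : (0:ℝ) ≤ 1 - 1/(2*(d:ℝ)) := by
      have : 1/(2*(d:ℝ)) ≤ 1/2 := by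
        apply div_le_div_of_nonneg_left one_pos.le (by norm_num) (by linarith)
      linarith
    have hpow : (1 - 1/(2*(d:ℝ))) ^ d ≤ (1 - α) ^ d :=
      pow_le_pow_left₀ hbase (by linarith) d
    linarith
  · -- far case
    intro hsum
    have hSlb : (1+ε)/2 ≤ S := by
      by_cases hall : ∀ a : Fin d, |p a - q a| < 2*t
      · have heq : S = (∑ a : Fin d, |p a - q a|) / (2*t) := by
          rw [Finset.sum_div]
          apply Finset.sum_congr rfl
          intro a _
          rw [min_eq_left]
          rw [div_le_one ht2]
          exact (hall a).le
        have : ((1+ε)*t)/(2*t) ≤ (∑ a : Fin d, |p a - q a|) / (2*t) := by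
          gcongr
        have h3 : ((1+ε)*t)/(2*t) = (1+ε)/2 := by field_simp
        linarith [heq ▸ this, h3 ▸ this]
      · push_neg at hall
        obtain ⟨a, ha⟩ := hall
        have h1 : (1:ℝ) ≤ min (|p a - q a| / (2 * t)) 1 := by
          rw [min_eq_right (by rw [le_div_iff₀ ht2]; linarith)]
        have h2 : min (|p a - q a| / (2 * t)) 1 ≤ S :=
          Finset.single_le_sum (f := fun a : Fin d => min (|p a - q a| / (2 * t)) 1)
            (fun b _ => le_min (div_nonneg (abs_nonneg _) ht2.le) one_pos.le)
            (Finset.mem_univ a)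
        linarith
    have hαge : (1+ε)/(2*(d:ℝ)) ≤ α := by
      rw [div_le_iff₀ (by linarith : (0:ℝ) < 2*(d:ℝ))]
      nlinarith
    have hpow : (1 - α) ^ d ≤ (1 - (1+ε)/(2*(d:ℝ))) ^ d :=
      pow_le_pow_left₀ (by linarith) (by linarith) d
    linarith
  · -- gap
    set x := 1 - 1/(2*(d:ℝ)) with hx
    set y := 1 - (1+ε)/(2*(d:ℝ)) with hy
    have hy4 : (1:ℝ) - 3/(4*(d:ℝ)) ≤ y := by
      have : (1+ε)/(2*(d:ℝ)) ≤ 3/(4*(d:ℝ)) := by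
        rw [div_le_div_iff₀ (by linarith) (by linarith)]
        nlinarith [mul_le_mul_of_nonneg_right hε2.le hD0.le]
      simp only [hy]; linarith
    have hz0 : (0:ℝ) ≤ 1 - 3/(4*(d:ℝ)) := by
      have : 3/(4*(d:ℝ)) ≤ 3/4 := by
        apply div_le_div_of_nonneg_left (by norm_num) (by norm_num) (by linarith)
      linarith
    have hy0 : (0:ℝ) ≤ y := le_trans hz0 hy4
    have hyx : y ≤ x := by
      simp only [hx, hy]
      have : 1/(2*(d:ℝ)) ≤ (1+ε)/(2*(d:ℝ)) :=
        div_le_div_of_nonneg_right (by linarith) (by linarith)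
      linarith
    -- y^(d-1) ≥ 1/4 via Bernoulli
    have hbern : (1:ℝ)/4 ≤ (1 - 3/(4*(d:ℝ))) ^ (d-1) := by
      have h := one_add_mul_le_pow (a := -(3/(4*(d:ℝ)))) (by nlinarith : (-2:ℝ) ≤ -(3/(4*(d:ℝ)))) (d-1)
      have hc : ((d-1:ℕ):ℝ) = (d:ℝ) - 1 := by
        rw [Nat.cast_sub hd]; simp
      rw [hc] at h
      have h2 : 1 + ((d:ℝ)-1) * (-(3/(4*(d:ℝ)))) ≥ 1/4 := by
        have : ((d:ℝ)-1) * (3/(4*(d:ℝ))) ≤ 3/4 := by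
          rw [mul_comm, div_mul_eq_mul_div, div_le_div_iff₀ (by linarith) (by norm_num)]
          nlinarith
        linarith
      calc (1:ℝ)/4 ≤ 1 + ((d:ℝ)-1) * (-(3/(4*(d:ℝ)))) := h2
      _ ≤ (1 + -(3/(4*(d:ℝ)))) ^ (d-1) := h
      _ = (1 - 3/(4*(d:ℝ))) ^ (d-1) := by ring_nf
    have hyd1 : (1:ℝ)/4 ≤ y ^ (d-1) :=
      le_trans hbern (pow_le_pow_left₀ hz0 hy4 (d-1))
    -- x^d - y^d = (sum) * (x - y) ≥ d * y^(d-1) * (x-y)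
    have hgeom : (∑ i ∈ Finset.range d, x ^ i * y ^ (d - 1 - i)) * (x - y) = x ^ d - y ^ d :=
      geom_sum₂_mul x y d
    have hsumlb : (d:ℝ) * y ^ (d-1) ≤ ∑ i ∈ Finset.range d, x ^ i * y ^ (d - 1 - i) := by
      have : ∀ i ∈ Finset.range d, y ^ (d-1) ≤ x ^ i * y ^ (d - 1 - i) := by
        intro i hi
        have hid : i ≤ d - 1 := by
          have := Finset.mem_range.mp hi; omega
        have hsplit : y ^ (d-1) = y ^ i * y ^ (d - 1 - i) := by
          rw [← pow_add]
          congr 1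
          omega
        rw [hsplit]
        exact mul_le_mul_of_nonneg_right (pow_le_pow_left₀ hy0 hyx i) (pow_nonneg hy0 _)
      calc (d:ℝ) * y ^ (d-1) = ∑ _i ∈ Finset.range d, y ^ (d-1) := by
            rw [Finset.sum_const, Finset.card_range, nsmul_eq_mul]
      _ ≤ _ := Finset.sum_le_sum this
    have hxy : x - y = ε / (2*(d:ℝ)) := by
      simp only [hx, hy]; field_simp; ring
    have hxy0 : 0 ≤ x - y := by linarith
    have hgap : ε/8 ≤ x ^ d - y ^ d := by
      have h1 : (d:ℝ) * y ^ (d-1) * (x - y) ≤ (∑ i ∈ Finset.range d, x ^ i * y ^ (d - 1 - i)) * (x - y) :=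
        mul_le_mul_of_nonneg_right hsumlb hxy0
      have key : ∀ Y : ℝ, (d:ℝ) * Y * (ε / (2*(d:ℝ))) = Y * (ε/2) := by
        intro Y; field_simp
      have h2 : ε/8 ≤ (d:ℝ) * y ^ (d-1) * (x - y) := by
        rw [hxy, key]
        nlinarith
      rw [hgeom] at h1
      exact le_trans h2 h1
    linarith
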